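/- Let L ∈ 𝐋 and V ∈ 𝒱(L), and suppose that for every t = 1,…,T one has ‖V_{•,t}‖_op² < λ⁺_min((LᵀL)_{t,t}), where ‖V_{•,t}‖_op is the operator norm of the t-th block column of V and λ⁺_min(A) denotes the smallest strictly positive eigenvalue of the positive semidefinite matrix A (with λ⁺_min(A) := +∞ if A = 0). Then ((L+V)ᵀL)_{t,t} is positive semidefinite for all t = 1,…,T, and 𝐎*(L, L+V) = 𝐎*(L,L). In particular, if L ∈ 𝐋^reg then 𝐎*(L, L+V) = {Id}. -/

import Mathlib

open Matrix Filter Topology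

/-- Square matrices of size `dT × dT`, indexed by blocks: index `(t, i)` is
row/column `i` within block `t`. -/
abbrev Mat (d T : ℕ) := Matrix (Fin T × Fin d) (Fin T × Fin d) ℝ

/-- The `t`-th diagonal `d × d` block of a `dT × dT` matrix. -/
def blk {d T : ℕ} (A : Mat d T) (t : Fin T) : Matrix (Fin d) (Fin d) ℝ :=
  fun i j => A (t, i) (t, j)

/-- The `t`-th block column of a `dT × dT` matrix, a `dT × d` matrix. -/
def colBlk {d T : ℕ} (A : Mat d T) (t : Fin T) : Matrix (Fin T × Fin d) (Fin d) ℝ :=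
  fun p j => A p (t, j)

/-- Membership in `𝐋`: block lower triangular matrices. -/
def memL {d T : ℕ} (A : Mat d T) : Prop :=
  ∀ (t s : Fin T) (i j : Fin d), t < s → A (t, i) (s, j) = 0

/-- Membership in `𝐎`: block diagonal matrices with orthogonal `d × d` diagonal blocks
(equivalently: block diagonal and orthogonal). -/
def memO {d T : ℕ} (O : Mat d T) : Prop :=
  (∀ (t s : Fin T) (i j : Fin d), t ≠ s → O (t, i) (s, j) = 0) ∧ Oᵀ * O = 1

/-- The Frobenius norm of a real matrix. -/
noncomputable def frobNorm {m n : Type*} [Fintype m] [Fintype n] (A : Matrix m n ℝ) : ℝ :=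
  Real.sqrt (∑ i, ∑ j, (A i j) ^ 2)

/-- The Frobenius inner product of two real matrices. -/
noncomputable def frobInner {m n : Type*} [Fintype m] [Fintype n] (A B : Matrix m n ℝ) : ℝ :=
  ∑ i, ∑ j, A i j * B i j

/-- The adapted Bures–Wasserstein distance `d_ABW(L, M) = inf_{O ∈ 𝐎} ‖L - M O‖_F`. -/
noncomputable def dABW {d T : ℕ} (L M : Mat d T) : ℝ :=
  sInf {r : ℝ | ∃ O : Mat d T, memO O ∧ r = frobNorm (L - M * O)}

/-- The set `𝐎*(L, M)` of optimizers of `inf_{O ∈ 𝐎} ‖L - M O‖_F`. -/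
noncomputable def OStar {d T : ℕ} (L M : Mat d T) : Set (Mat d T) :=
  {O | memO O ∧ frobNorm (L - M * O) = dABW L M}

/-- The set `𝐕(L) = {M P - L : M ∈ 𝐋, P ∈ 𝐎*(L, M)}`. -/
noncomputable def VSet {d T : ℕ} (L : Mat d T) : Set (Mat d T) :=
  {V | ∃ M P : Mat d T, memL M ∧ P ∈ OStar L M ∧ V = M * P - L}

/-- The set `𝒱(L) = {V ∈ 𝐋 : (Vᵀ L)_{t,t} is symmetric for all t}`. -/
def calV {d T : ℕ} (L : Mat d T) : Set (Mat d T) :=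
  {V | memL V ∧ ∀ t : Fin T, (blk (Vᵀ * L) t).IsSymm}

/-- The set `𝐋^reg = {L ∈ 𝐋 : (Lᵀ L)_{t,t} is positive definite for all t}`. -/
def LReg {d T : ℕ} : Set (Mat d T) :=
  {L | memL L ∧ ∀ t : Fin T, (blk (Lᵀ * L) t).PosDef}

/-- The sum of the singular values of a real square matrix `A`,
i.e. the trace of the positive semidefinite square root of `Aᵀ A`. -/
noncomputable def svSum {n : ℕ} (A : Matrix (Fin n) (Fin n) ℝ) : ℝ :=
  ((Matrix.posSemidef_conjTranspose_mul_self A).1.eigenvectorUnitary.1 *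
    diagonal (((↑) : ℝ → ℝ) ∘ (√·) ∘ (Matrix.posSemidef_conjTranspose_mul_self A).1.eigenvalues) *
    (star (Matrix.posSemidef_conjTranspose_mul_self A).1.eigenvectorUnitary : Matrix (Fin n) (Fin n) ℝ)).trace

/-- The operator norm of a real matrix: the supremum of the euclidean norm `‖A x‖₂`
over the euclidean unit ball. -/
noncomputable def opNorm {m n : Type*} [Fintype m] [Fintype n] (A : Matrix m n ℝ) : ℝ :=
  sSup {r : ℝ | ∃ x : n → ℝ, (∑ j, (x j) ^ 2) ≤ 1 ∧ r = Real.sqrt (∑ i, (A.mulVec x i) ^ 2)}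

namespace Stmt14Aux

open Matrix
open scoped RealInnerProductSpace

variable {ι m n : Type*} [Fintype ι] [Fintype m] [Fintype n]

lemma ctr (A : Matrix m n ℝ) : Aᴴ = Aᵀ := by
  ext i j; simp [conjTranspose]

/-! ### Euclidean norm -/

noncomputable def en (x : n → ℝ) : ℝ := Real.sqrt (∑ i, x i ^ 2)

lemma en_nonneg (x : n → ℝ) : 0 ≤ en x := Real.sqrt_nonneg _

lemma sq_en (x : n → ℝ) : en x ^ 2 = ∑ i, x i ^ 2 :=
  Real.sq_sqrt (by positivity)

lemma en_zero : en (0 : n → ℝ) = 0 := by simp [en]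

lemma dot_self_eq (x : n → ℝ) : x ⬝ᵥ x = ∑ i, x i ^ 2 := by
  simp [dotProduct, pow_two]

lemma en_pos {x : n → ℝ} (hx : x ≠ 0) : 0 < en x := by
  obtain ⟨j, hj⟩ : ∃ j, x j ≠ 0 := by
    by_contra h; push_neg at h; exact hx (funext h)
  exact Real.sqrt_pos.2 <| Finset.sum_pos'
    (fun i _ => sq_nonneg _) ⟨j, Finset.mem_univ j, by positivity⟩

lemma dot_le (x y : n → ℝ) : x ⬝ᵥ y ≤ en x * en y := by
  have h := Finset.sum_mul_sq_le_sq_mul_sq Finset.univ x y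
  calc x ⬝ᵥ y ≤ |x ⬝ᵥ y| := le_abs_self _
    _ = Real.sqrt ((x ⬝ᵥ y) ^ 2) := (Real.sqrt_sq_eq_abs _).symm
    _ ≤ Real.sqrt ((∑ i, x i ^ 2) * ∑ i, y i ^ 2) := Real.sqrt_le_sqrt h
    _ = en x * en y := by
        rw [en, en, ← Real.sqrt_mul (by positivity)]

lemma neg_dot_le (x y : n → ℝ) : -(x ⬝ᵥ y) ≤ en x * en y := by
  have h := dot_le (-x) y
  have hx : en (-x) = en x := by simp [en]
  rw [neg_dotProduct, hx] at h
  exact h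

lemma en_smul (c : ℝ) (hc : 0 ≤ c) (x : n → ℝ) : en (c • x) = c * en x := by
  simp only [en, Pi.smul_apply, smul_eq_mul, mul_pow, ← Finset.mul_sum]
  rw [Real.sqrt_mul (sq_nonneg c), Real.sqrt_sq hc]

lemma en_sq_eq_dot (x : n → ℝ) : en x ^ 2 = x ⬝ᵥ x := by
  rw [sq_en, dot_self_eq]

/-! ### Operator norm -/

lemma opSet_bddAbove (A : Matrix m n ℝ) :
    BddAbove {r : ℝ | ∃ x : n → ℝ, (∑ j, (x j) ^ 2) ≤ 1 ∧
      r = Real.sqrt (∑ i, (A.mulVec x i) ^ 2)} := by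
  refine ⟨Real.sqrt (∑ i, ∑ j, A i j ^ 2), ?_⟩
  rintro r ⟨x, hx, rfl⟩
  apply Real.sqrt_le_sqrt
  refine Finset.sum_le_sum fun i _ => ?_
  calc (A.mulVec x i) ^ 2 = (∑ j, A i j * x j) ^ 2 := by rfl
    _ ≤ (∑ j, A i j ^ 2) * ∑ j, x j ^ 2 := Finset.sum_mul_sq_le_sq_mul_sq _ _ _
    _ ≤ (∑ j, A i j ^ 2) * 1 := by
        apply mul_le_mul_of_nonneg_left hx (by positivity)
    _ = ∑ j, A i j ^ 2 := mul_one _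

lemma opNorm_nonneg (A : Matrix m n ℝ) : 0 ≤ opNorm A := by
  apply le_csSup (opSet_bddAbove A)
  exact ⟨0, by simp, by simp [Matrix.mulVec_zero]⟩

lemma en_mulVec_le (A : Matrix m n ℝ) (x : n → ℝ) :
    en (A *ᵥ x) ≤ opNorm A * en x := by
  rcases eq_or_ne x 0 with rfl | hx
  · simp [Matrix.mulVec_zero, en_zero]
  · have hc : 0 < en x := en_pos hx
    have hy : en (A *ᵥ ((en x)⁻¹ • x)) ≤ opNorm A := by
      apply le_csSup (opSet_bddAbove A)
      refine ⟨(en x)⁻¹ • x, ?_, rfl⟩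
      have : ∑ j, ((en x)⁻¹ • x) j ^ 2 = ((en x)⁻¹) ^ 2 * ∑ j, x j ^ 2 := by
        simp [mul_pow, Finset.mul_sum]
      rw [this, ← sq_en x]
      rw [inv_pow, inv_mul_cancel₀ (by positivity)]
    rw [Matrix.mulVec_smul, en_smul _ (by positivity)] at hy
    calc en (A *ᵥ x) = en x * ((en x)⁻¹ * en (A *ᵥ x)) := by
          field_simp
      _ ≤ en x * opNorm A := by
          apply mul_le_mul_of_nonneg_left hy (le_of_lt hc)
      _ = opNorm A * en x := mul_comm _ _

/-! ### Frobenius / trace -/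

lemma sum_sq_eq_trace (A : Matrix m n ℝ) [DecidableEq n] :
    ∑ i, ∑ j, A i j ^ 2 = (Aᵀ * A).trace := by
  rw [Matrix.trace]
  rw [Finset.sum_comm]
  refine Finset.sum_congr rfl fun j _ => ?_
  simp [Matrix.diag, Matrix.mul_apply, pow_two]

lemma sum_mul_eq_trace (A B : Matrix m n ℝ) [DecidableEq n] :
    ∑ i, ∑ j, A i j * B i j = (Aᵀ * B).trace := by
  rw [Matrix.trace]
  rw [Finset.sum_comm]
  refine Finset.sum_congr rfl fun j _ => ?_
  simp [Matrix.diag, Matrix.mul_apply]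

/-! ### PSD facts -/

lemma psd_dot {S : Matrix n n ℝ} (hS : S.PosSemidef) (x : n → ℝ) :
    0 ≤ x ⬝ᵥ (S *ᵥ x) := by
  simpa using hS.dotProduct_mulVec_nonneg x

lemma psd_dot_zero {S : Matrix n n ℝ} (hS : S.PosSemidef) (x : n → ℝ)
    (h : x ⬝ᵥ (S *ᵥ x) = 0) : S *ᵥ x = 0 := by
  apply (hS.dotProduct_mulVec_zero_iff x).mp
  simpa using h

lemma diag_quad (S : Matrix n n ℝ) (X : Matrix n m ℝ) (j : m) :
    (Xᵀ * S * X) j j = (fun i => X i j) ⬝ᵥ (S *ᵥ fun i => X i j) := by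
  simp only [Matrix.mul_apply, Matrix.transpose_apply, dotProduct, Matrix.mulVec, dotProduct,
    Finset.sum_mul, Finset.mul_sum]
  rw [Finset.sum_comm]
  refine Finset.sum_congr rfl fun p _ => Finset.sum_congr rfl fun q _ => by ring

lemma diag_eq_quad (S : Matrix n n ℝ) [DecidableEq n] (i : n) :
    S i i = (Pi.single i 1) ⬝ᵥ (S *ᵥ Pi.single i 1) := by
  simp [Matrix.mulVec, dotProduct, Pi.single_apply, ite_mul, mul_ite]

lemma trace_psd_nonneg {M : Matrix n n ℝ} [DecidableEq n] (hM : M.PosSemidef) : 0 ≤ M.trace := by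
  rw [Matrix.trace]
  refine Finset.sum_nonneg fun i _ => ?_
  have := psd_dot hM (Pi.single i 1)
  rw [← diag_eq_quad] at this
  simpa [Matrix.diag] using this

lemma trace_orth_le {S O : Matrix n n ℝ} [DecidableEq n]
    (hS : S.PosSemidef) (hO : Oᵀ * O = 1) :
    (S * O).trace ≤ S.trace ∧ ((S * O).trace = S.trace ↔ S * O = S) := by
  have hOOt : O * Oᵀ = 1 := mul_eq_one_comm.mp hO
  have hSsymm : Sᵀ = S := by
    rw [← ctr]; exact hS.1
  set X : Matrix n n ℝ := 1 - O with hX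
  have h1 : Xᵀ * S * X = S - S * O - Oᵀ * S + Oᵀ * S * O := by
    simp only [hX, Matrix.transpose_sub, Matrix.transpose_one, Matrix.sub_mul, Matrix.mul_sub,
      Matrix.one_mul, Matrix.mul_one]
    noncomm_ring
  have h2 : (Oᵀ * S).trace = (S * O).trace := by
    rw [Matrix.trace_mul_comm]
    rw [← Matrix.trace_transpose (S * Oᵀ), Matrix.transpose_mul, Matrix.transpose_transpose,
      hSsymm, Matrix.trace_mul_comm]
  have h3 : (Oᵀ * S * O).trace = S.trace := by
    rw [Matrix.mul_assoc, Matrix.trace_mul_comm, Matrix.mul_assoc, hOOt, Matrix.mul_one]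
  have key : (Xᵀ * S * X).trace = 2 * (S.trace - (S * O).trace) := by
    rw [h1, Matrix.trace_add, Matrix.trace_sub, Matrix.trace_sub, h2, h3]
    ring
  have psdX : (Xᵀ * S * X).PosSemidef := by
    have h := hS.conjTranspose_mul_mul_same X
    rwa [ctr] at h
  constructor
  · have := trace_psd_nonneg psdX
    rw [key] at this
    linarith
  · constructor
    · intro heq
      have htr0 : (Xᵀ * S * X).trace = 0 := by rw [key, heq]; ring
      rw [Matrix.trace] at htr0
      have hdiag : ∀ j, (Xᵀ * S * X) j j = 0 := by
        have h := (Finset.sum_eq_zero_iff_of_nonneg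
          (fun j (_ : j ∈ Finset.univ) => by
            show (0:ℝ) ≤ (Xᵀ * S * X) j j
            rw [diag_quad]; exact psd_dot hS _)).mp htr0
        intro j; exact h j (Finset.mem_univ j)
      have hcol : ∀ j, S *ᵥ (fun i => X i j) = 0 := by
        intro j
        apply psd_dot_zero hS
        rw [← diag_quad, hdiag]
      have hSX : S * X = 0 := by
        ext i j
        have := congrFun (hcol j) i
        simpa [Matrix.mulVec, dotProduct, Matrix.mul_apply] using this
      rw [hX, Matrix.mul_sub, Matrix.mul_one, sub_eq_zero] at hSX
      exact hSX.symm
    · intro h; rw [h]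

/-! ### Core spectral lemma -/

lemma mulVec_finsum (A : Matrix m n ℝ) {α : Type*} (s : Finset α) (f : α → n → ℝ) :
    A *ᵥ (∑ i ∈ s, f i) = ∑ i ∈ s, A *ᵥ f i := by
  simpa only [Matrix.mulVecLin_apply] using map_sum (Matrix.mulVecLin A) f s

lemma sum_dot {α : Type*} (s : Finset α) (f : α → n → ℝ) (y : n → ℝ) :
    (∑ i ∈ s, f i) ⬝ᵥ y = ∑ i ∈ s, f i ⬝ᵥ y := by
  simp only [dotProduct, Finset.sum_apply, Finset.sum_mul]
  exact Finset.sum_comm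

lemma dot_sum {α : Type*} (s : Finset α) (y : n → ℝ) (f : α → n → ℝ) :
    y ⬝ᵥ (∑ i ∈ s, f i) = ∑ i ∈ s, y ⬝ᵥ f i := by
  simp only [dotProduct, Finset.sum_apply, Finset.mul_sum]
  exact Finset.sum_comm

lemma core {k : ℕ} (Lc Vc : Matrix ι (Fin k) ℝ)
    (hsym : (Vcᵀ * Lc)ᵀ = Vcᵀ * Lc)
    (hsmall : ∀ μ : ℝ, 0 < μ → (∃ x : Fin k → ℝ, x ≠ 0 ∧ (Lcᵀ * Lc) *ᵥ x = μ • x) →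
      opNorm Vc ^ 2 < μ) :
    (Lcᵀ * Lc + Vcᵀ * Lc).PosSemidef ∧
    ∀ x : Fin k → ℝ, ((Lcᵀ * Lc + Vcᵀ * Lc) *ᵥ x = 0 ↔ (Lcᵀ * Lc) *ᵥ x = 0) := by
  classical
  set A := Lcᵀ * Lc with hAdef
  set B := Vcᵀ * Lc with hBdef
  set ν := opNorm Vc with hνdef
  have hν0 : 0 ≤ ν := opNorm_nonneg Vc
  have hA : A.PosSemidef := by
    have := Matrix.posSemidef_conjTranspose_mul_self Lc
    rwa [ctr] at this
  have hBalt : Lcᵀ * Vc = B :=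
    calc Lcᵀ * Vc = Bᵀ := by
          rw [hBdef, Matrix.transpose_mul, Matrix.transpose_transpose]
      _ = B := hsym
  -- quadratic form identities
  have hAdot : ∀ x y : Fin k → ℝ, x ⬝ᵥ (A *ᵥ y) = (Lc *ᵥ x) ⬝ᵥ (Lc *ᵥ y) := by
    intro x y
    rw [hAdef, ← Matrix.mulVec_mulVec, Matrix.dotProduct_mulVec, Matrix.vecMul_transpose]
  have hBdot : ∀ x y : Fin k → ℝ, x ⬝ᵥ (B *ᵥ y) = (Vc *ᵥ x) ⬝ᵥ (Lc *ᵥ y) := by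
    intro x y
    rw [hBdef, ← Matrix.mulVec_mulVec, Matrix.dotProduct_mulVec, Matrix.vecMul_transpose]
  have hBdot' : ∀ x y : Fin k → ℝ, x ⬝ᵥ (B *ᵥ y) = (Lc *ᵥ x) ⬝ᵥ (Vc *ᵥ y) := by
    intro x y
    rw [← hBalt, ← Matrix.mulVec_mulVec, Matrix.dotProduct_mulVec, Matrix.vecMul_transpose]
  -- Lc x = 0 from A x = 0
  have hLcZero : ∀ x : Fin k → ℝ, A *ᵥ x = 0 → Lc *ᵥ x = 0 := by
    intro x hx
    have : (Lc *ᵥ x) ⬝ᵥ (Lc *ᵥ x) = 0 := by rw [← hAdot, hx, dotProduct_zero]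
    exact dotProduct_self_eq_zero.mp this
  -- spectral data
  have hAH : A.IsHermitian := hA.1
  set b := hAH.eigenvectorBasis with hb
  set μ : Fin k → ℝ := hAH.eigenvalues with hμ
  have heig : ∀ i, A *ᵥ ⇑(b i) = μ i • ⇑(b i) := fun i => hAH.mulVec_eigenvectorBasis i
  have horth : ∀ i j, ⇑(b i) ⬝ᵥ ⇑(b j) = if i = j then 1 else 0 := by
    have h := orthonormal_iff_ite.mp b.orthonormal
    intro i j; have := h i j; rw [EuclideanSpace.inner_eq_star_dotProduct] at this
    simpa [dotProduct_comm] using this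
  have hμ0 : ∀ i, 0 ≤ μ i := hA.eigenvalues_nonneg
  have hbne : ∀ i, (⇑(b i) : Fin k → ℝ) ≠ 0 := by
    intro i hzero
    apply b.orthonormal.ne_zero i
    ext j; exact congrFun hzero j
  have hsm : ∀ i, μ i ≠ 0 → ν ^ 2 < μ i := by
    intro i hi
    exact hsmall (μ i) (lt_of_le_of_ne (hμ0 i) (Ne.symm hi)) ⟨⇑(b i), hbne i, heig i⟩
  have hrepr : ∀ x : Fin k → ℝ, ∑ i, (⇑(b i) ⬝ᵥ x) • ⇑(b i) = x := by
    intro x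
    have h := congrArg WithLp.ofLp (b.sum_repr' (WithLp.toLp 2 x))
    simpa [EuclideanSpace.inner_eq_star_dotProduct, dotProduct_comm] using h
  set P : Finset (Fin k) := Finset.univ.filter (fun i => μ i ≠ 0) with hP
  -- the decomposition, for an arbitrary x
  have main : ∀ x : Fin k → ℝ,
      (0 ≤ x ⬝ᵥ ((A + B) *ᵥ x)) ∧ ((A + B) *ᵥ x = 0 → A *ᵥ x = 0) := by
    intro x
    set c : Fin k → ℝ := fun i => ⇑(b i) ⬝ᵥ x with hc
    set x₁ : Fin k → ℝ := ∑ i ∈ P, c i • ⇑(b i) with hx₁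
    set x₀ : Fin k → ℝ := x - x₁ with hx₀
    have hAx : A *ᵥ x = ∑ i ∈ P, (c i * μ i) • ⇑(b i) := by
      conv_lhs => rw [← hrepr x]
      rw [mulVec_finsum]
      rw [← Finset.sum_filter_add_sum_filter_not Finset.univ (fun i => μ i ≠ 0)]
      have hzero : ∑ i ∈ Finset.univ.filter (fun i => ¬ μ i ≠ 0), A *ᵥ (c i • ⇑(b i)) = 0 := by
        apply Finset.sum_eq_zero
        intro i hi
        rw [Finset.mem_filter] at hi
        have : μ i = 0 := not_not.mp hi.2
        rw [Matrix.mulVec_smul, heig i, this, zero_smul, smul_zero]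
      rw [hzero, add_zero]
      refine Finset.sum_congr rfl fun i _ => ?_
      rw [Matrix.mulVec_smul, heig i, smul_smul]
    have hAx₁ : A *ᵥ x₁ = ∑ i ∈ P, (c i * μ i) • ⇑(b i) := by
      rw [hx₁, mulVec_finsum]
      refine Finset.sum_congr rfl fun i _ => ?_
      rw [Matrix.mulVec_smul, heig i, smul_smul]
    have hAx₀ : A *ᵥ x₀ = 0 := by
      rw [hx₀, Matrix.mulVec_sub, hAx, hAx₁, sub_self]
    have hLx₀ : Lc *ᵥ x₀ = 0 := hLcZero _ hAx₀
    have hSx₀ : (A + B) *ᵥ x₀ = 0 := by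
      rw [Matrix.add_mulVec, hAx₀, zero_add, hBdef, ← Matrix.mulVec_mulVec, hLx₀,
        Matrix.mulVec_zero]
    have hx₀S : ∀ y : Fin k → ℝ, x₀ ⬝ᵥ ((A + B) *ᵥ y) = 0 := by
      intro y
      rw [Matrix.add_mulVec, dotProduct_add, hAdot, hBdot', hLx₀, zero_dotProduct,
        zero_dotProduct, add_zero]
    have hquad : x ⬝ᵥ ((A + B) *ᵥ x) = x₁ ⬝ᵥ ((A + B) *ᵥ x₁) := by
      have hxsum : x = x₀ + x₁ := by rw [hx₀]; abel
      calc x ⬝ᵥ ((A + B) *ᵥ x) = (x₀ + x₁) ⬝ᵥ ((A + B) *ᵥ (x₀ + x₁)) := by rw [← hxsum]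
        _ = x₁ ⬝ᵥ ((A + B) *ᵥ x₁) := by
            rw [Matrix.mulVec_add, hSx₀, zero_add, add_dotProduct, hx₀S, zero_add]
    -- norms of x₁
    have hdot_sums : ∀ a e : Fin k → ℝ, True := fun _ _ => trivial
    have hx₁x₁ : x₁ ⬝ᵥ x₁ = ∑ i ∈ P, c i ^ 2 := by
      rw [hx₁, sum_dot]
      refine Finset.sum_congr rfl fun i hi => ?_
      rw [smul_dotProduct, dot_sum]
      rw [Finset.sum_eq_single i]
      · rw [dotProduct_smul, horth, if_pos rfl]
        simp [pow_two]
      · intro j hj hne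
        rw [dotProduct_smul, horth, if_neg (Ne.symm hne)]
        simp
      · intro hcon; exact absurd hi hcon
    have hx₁Ax₁ : x₁ ⬝ᵥ (A *ᵥ x₁) = ∑ i ∈ P, μ i * c i ^ 2 := by
      rw [hAx₁, hx₁, sum_dot]
      refine Finset.sum_congr rfl fun i hi => ?_
      rw [smul_dotProduct, dot_sum]
      rw [Finset.sum_eq_single i]
      · rw [dotProduct_smul, horth, if_pos rfl]
        simp [pow_two]; ring
      · intro j hj hne
        rw [dotProduct_smul, horth, if_neg (Ne.symm hne)]
        simp
      · intro hcon; exact absurd hi hcon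
    have hbound : ν ^ 2 * (x₁ ⬝ᵥ x₁) ≤ x₁ ⬝ᵥ (A *ᵥ x₁) := by
      rw [hx₁x₁, hx₁Ax₁, Finset.mul_sum]
      refine Finset.sum_le_sum fun i hi => ?_
      have hμi : ν ^ 2 < μ i := hsm i (by simpa [hP] using hi)
      exact mul_le_mul_of_nonneg_right (le_of_lt hμi) (sq_nonneg _)
    -- quadratic form bound on x₁
    have hq₁ : x₁ ⬝ᵥ ((A + B) *ᵥ x₁) ≥
        en (Lc *ᵥ x₁) ^ 2 - ν * en x₁ * en (Lc *ᵥ x₁) := by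
      have h1 : x₁ ⬝ᵥ ((A + B) *ᵥ x₁)
          = (Lc *ᵥ x₁) ⬝ᵥ (Lc *ᵥ x₁) + (Vc *ᵥ x₁) ⬝ᵥ (Lc *ᵥ x₁) := by
        rw [Matrix.add_mulVec, dotProduct_add, hAdot, hBdot]
      rw [h1, ← en_sq_eq_dot]
      have h2 : -((Vc *ᵥ x₁) ⬝ᵥ (Lc *ᵥ x₁)) ≤ en (Vc *ᵥ x₁) * en (Lc *ᵥ x₁) :=
        neg_dot_le _ _
      have h3 : en (Vc *ᵥ x₁) * en (Lc *ᵥ x₁) ≤ (ν * en x₁) * en (Lc *ᵥ x₁) :=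
        mul_le_mul_of_nonneg_right (en_mulVec_le Vc x₁) (en_nonneg _)
      nlinarith [en_nonneg (Lc *ᵥ x₁)]
    have hLx₁sq : en (Lc *ᵥ x₁) ^ 2 = x₁ ⬝ᵥ (A *ᵥ x₁) := by
      rw [en_sq_eq_dot, hAdot]
    have hνx₁ : ν * en x₁ ≤ en (Lc *ᵥ x₁) := by
      have hns : (ν * en x₁) ^ 2 ≤ en (Lc *ᵥ x₁) ^ 2 := by
        rw [mul_pow, hLx₁sq, sq_en]
        rw [← dot_self_eq]
        exact hbound
      have h0 : 0 ≤ ν * en x₁ := mul_nonneg hν0 (en_nonneg _)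
      nlinarith [en_nonneg (Lc *ᵥ x₁)]
    constructor
    · -- nonnegativity
      rw [hquad]
      have : ν * en x₁ * en (Lc *ᵥ x₁) ≤ en (Lc *ᵥ x₁) ^ 2 := by
        nlinarith [en_nonneg (Lc *ᵥ x₁)]
      linarith [hq₁]
    · -- kernel
      intro hSx
      have hquad0 : x₁ ⬝ᵥ ((A + B) *ᵥ x₁) = 0 := by
        rw [← hquad, hSx, dotProduct_zero]
      have hx₁zero : x₁ = 0 := by
        by_contra hx₁ne
        have hcne : ∃ i ∈ P, c i ≠ 0 := by
          by_contra h
          push_neg at h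
          apply hx₁ne
          rw [hx₁]
          exact Finset.sum_eq_zero fun i hi => by rw [h i hi, zero_smul]
        obtain ⟨i₀, hi₀P, hc₀⟩ := hcne
        have hstrict : ν ^ 2 * (x₁ ⬝ᵥ x₁) < x₁ ⬝ᵥ (A *ᵥ x₁) := by
          rw [hx₁x₁, hx₁Ax₁, Finset.mul_sum]
          refine Finset.sum_lt_sum (fun i hi => mul_le_mul_of_nonneg_right
            (le_of_lt (hsm i (by simpa [hP] using hi))) (sq_nonneg _)) ?_
          exact ⟨i₀, hi₀P, mul_lt_mul_of_pos_right
            (hsm i₀ (by simpa [hP] using hi₀P)) (by positivity)⟩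
        have hνx₁strict : ν * en x₁ < en (Lc *ᵥ x₁) := by
          have hns : (ν * en x₁) ^ 2 < en (Lc *ᵥ x₁) ^ 2 := by
            rw [mul_pow, hLx₁sq, sq_en, ← dot_self_eq]
            exact hstrict
          have h0 : 0 ≤ ν * en x₁ := mul_nonneg hν0 (en_nonneg _)
          nlinarith [en_nonneg (Lc *ᵥ x₁)]
        have hLpos : 0 < en (Lc *ᵥ x₁) :=
          lt_of_le_of_lt (mul_nonneg hν0 (en_nonneg _)) hνx₁strict
        have : 0 < x₁ ⬝ᵥ ((A + B) *ᵥ x₁) := by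
          have := hq₁
          nlinarith
        linarith [hquad0]
      have : A *ᵥ x = A *ᵥ x₁ := by rw [hAx, hAx₁]
      rw [this, hx₁zero, Matrix.mulVec_zero]
  -- assemble
  have hherm : (A + B).IsHermitian := by
    have hAs : Aᵀ = A := by rw [← ctr]; exact hA.1
    show (A + B)ᴴ = A + B
    rw [ctr, Matrix.transpose_add, hAs, hsym]
  refine ⟨Matrix.PosSemidef.of_dotProduct_mulVec_nonneg hherm fun x => by simpa using (main x).1, fun x => ?_⟩
  constructor
  · exact (main x).2
  · intro hAx
    rw [Matrix.add_mulVec, hAx, zero_add, hBdef, ← Matrix.mulVec_mulVec,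
      hLcZero x hAx, Matrix.mulVec_zero]


/-! ### Column/kernel helpers -/

lemma mul_eq_zero_iff_cols [DecidableEq n] (S X : Matrix n n ℝ) :
    S * X = 0 ↔ ∀ j, S *ᵥ (fun i => X i j) = 0 := by
  constructor
  · intro h j
    funext i
    have := congrFun (congrFun h i) j
    simpa [Matrix.mulVec, dotProduct, Matrix.mul_apply] using this
  · intro h
    ext i j
    have := congrFun (h j) i
    simpa [Matrix.mulVec, dotProduct, Matrix.mul_apply] using this

lemma mul_eq_self_iff_of_ker [DecidableEq n] {S A : Matrix n n ℝ}
    (hker : ∀ x : n → ℝ, S *ᵥ x = 0 ↔ A *ᵥ x = 0) (Q : Matrix n n ℝ) :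
    S * Q = S ↔ A * Q = A := by
  have h1 : S * Q = S ↔ S * (Q - 1) = 0 := by
    rw [Matrix.mul_sub, Matrix.mul_one, sub_eq_zero]
  have h2 : A * Q = A ↔ A * (Q - 1) = 0 := by
    rw [Matrix.mul_sub, Matrix.mul_one, sub_eq_zero]
  rw [h1, h2, mul_eq_zero_iff_cols, mul_eq_zero_iff_cols]
  exact forall_congr' fun j => hker _

/-! ### Block lemmas -/

section Blocks

variable {d T : ℕ}

lemma blk_transpose_mul (A B : Mat d T) (t : Fin T) :
    blk (Aᵀ * B) t = (colBlk A t)ᵀ * colBlk B t := by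
  ext i j
  simp [blk, colBlk, Matrix.mul_apply]

lemma colBlk_add (A B : Mat d T) (t : Fin T) :
    colBlk (A + B) t = colBlk A t + colBlk B t := by
  ext p j; simp [colBlk]

lemma blk_one (t : Fin T) : blk (1 : Mat d T) t = 1 := by
  ext i j
  simp [blk, Matrix.one_apply, Prod.ext_iff]

lemma memO_one : memO (1 : Mat d T) := by
  refine ⟨fun t s i j h => ?_, by simp⟩
  apply Matrix.one_apply_ne
  simp only [ne_eq, Prod.mk.injEq, not_and]
  intro hc; exact absurd hc h

lemma blk_orth {O : Mat d T} (hO : memO O) (t : Fin T) :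
    (blk O t)ᵀ * blk O t = 1 := by
  ext i j
  have h := congrFun (congrFun hO.2 (t, i)) (t, j)
  rw [Matrix.mul_apply, Fintype.sum_prod_type] at h
  rw [Finset.sum_eq_single t (fun s _ hs => Finset.sum_eq_zero fun k _ => by
    rw [Matrix.transpose_apply, hO.1 s t k i hs, zero_mul])
    (fun hcon => absurd (Finset.mem_univ t) hcon)] at h
  rw [Matrix.mul_apply]
  calc ∑ k, (blk O t)ᵀ i k * blk O t k j
      = ∑ k, Oᵀ (t, i) (t, k) * O (t, k) (t, j) := rfl
    _ = (1 : Mat d T) (t, i) (t, j) := h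
    _ = (1 : Matrix (Fin d) (Fin d) ℝ) i j := by
        simp [Matrix.one_apply, Prod.ext_iff]

lemma trace_mul_blockdiag (C O : Mat d T)
    (hO : ∀ (t s : Fin T) (i j : Fin d), t ≠ s → O (t, i) (s, j) = 0) :
    (C * O).trace = ∑ t, (blk C t * blk O t).trace := by
  rw [Matrix.trace, Fintype.sum_prod_type]
  refine Finset.sum_congr rfl fun t _ => ?_
  rw [Matrix.trace]
  refine Finset.sum_congr rfl fun i _ => ?_
  rw [Matrix.diag_apply, Matrix.diag_apply, Matrix.mul_apply, Matrix.mul_apply,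
    Fintype.sum_prod_type]
  rw [Finset.sum_eq_single t (fun s _ hs => Finset.sum_eq_zero fun k _ => by
    rw [hO s t k i hs, mul_zero])
    (fun hcon => absurd (Finset.mem_univ t) hcon)]
  rfl

/-! ### The Frobenius expansion and the characterization of `OStar` -/

lemma frob_sq_expand (L M O : Mat d T) (hO : memO O) :
    ∑ p, ∑ q, ((L - M * O) p q) ^ 2
      = (Lᵀ * L).trace + (Mᵀ * M).trace
        - 2 * ∑ t, (blk (Lᵀ * M) t * blk O t).trace := by
  have h1 : ∀ p q : Fin T × Fin d, ((L - M * O) p q) ^ 2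
      = (L p q) ^ 2 - 2 * (L p q * (M * O) p q) + ((M * O) p q) ^ 2 := by
    intro p q; rw [Matrix.sub_apply]; ring
  have hsum : ∑ p, ∑ q, ((L - M * O) p q) ^ 2
      = (∑ p, ∑ q, (L p q) ^ 2) - 2 * (∑ p, ∑ q, L p q * (M * O) p q)
        + ∑ p, ∑ q, ((M * O) p q) ^ 2 := by
    simp_rw [h1, Finset.sum_add_distrib, Finset.sum_sub_distrib, Finset.mul_sum]
  have hMO : ∑ p, ∑ q, ((M * O) p q) ^ 2 = (Mᵀ * M).trace := by
    rw [sum_sq_eq_trace]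
    have he : (M * O)ᵀ * (M * O) = Oᵀ * ((Mᵀ * M) * O) := by
      rw [Matrix.transpose_mul]; noncomm_ring
    rw [he, Matrix.trace_mul_comm, Matrix.mul_assoc, mul_eq_one_comm.mp hO.2,
      Matrix.mul_one]
  have hLMO : ∑ p, ∑ q, L p q * (M * O) p q
      = ∑ t, (blk (Lᵀ * M) t * blk O t).trace := by
    rw [sum_mul_eq_trace, ← Matrix.mul_assoc, trace_mul_blockdiag _ _ hO.1]
  rw [hsum, hMO, hLMO, sum_sq_eq_trace L]
  ring

lemma sum_le_sum_iff_eq (f g : Fin T → ℝ) (h : ∀ t, f t ≤ g t) :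
    (∑ t, f t = ∑ t, g t) ↔ ∀ t, f t = g t := by
  constructor
  · intro he t
    have h0 : ∑ t, (g t - f t) = 0 := by
      rw [Finset.sum_sub_distrib, he, sub_self]
    have := (Finset.sum_eq_zero_iff_of_nonneg
      (fun t _ => sub_nonneg.2 (h t))).mp h0 t (Finset.mem_univ t)
    linarith
  · intro he; exact Finset.sum_congr rfl fun t _ => he t

lemma dABW_eq_and_OStar_char (L M : Mat d T)
    (hpsd : ∀ t, (blk (Lᵀ * M) t).PosSemidef) :
    OStar L M
      = {O | memO O ∧ ∀ t, blk (Lᵀ * M) t * blk O t = blk (Lᵀ * M) t} := by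
  classical
  set c : ℝ := (Lᵀ * L).trace + (Mᵀ * M).trace with hc
  -- the trace comparison for each orthogonal O
  have htr : ∀ O : Mat d T, memO O → ∀ t,
      (blk (Lᵀ * M) t * blk O t).trace ≤ (blk (Lᵀ * M) t).trace ∧
      ((blk (Lᵀ * M) t * blk O t).trace = (blk (Lᵀ * M) t).trace ↔
        blk (Lᵀ * M) t * blk O t = blk (Lᵀ * M) t) := by
    intro O hO t
    exact trace_orth_le (hpsd t) (blk_orth hO t)
  have hE1 : ∑ p, ∑ q, ((L - M * 1) p q) ^ 2
      = c - 2 * ∑ t, (blk (Lᵀ * M) t).trace := by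
    rw [frob_sq_expand L M 1 memO_one]
    simp_rw [blk_one, Matrix.mul_one]
    rw [hc]
  have hEle : ∀ O : Mat d T, memO O →
      ∑ p, ∑ q, ((L - M * 1) p q) ^ 2 ≤ ∑ p, ∑ q, ((L - M * O) p q) ^ 2 := by
    intro O hO
    rw [hE1, frob_sq_expand L M O hO]
    have : ∑ t, (blk (Lᵀ * M) t * blk O t).trace ≤ ∑ t, (blk (Lᵀ * M) t).trace :=
      Finset.sum_le_sum fun t _ => (htr O hO t).1
    linarith
  have hfle : ∀ O : Mat d T, memO O →
      frobNorm (L - M * 1) ≤ frobNorm (L - M * O) := by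
    intro O hO
    exact Real.sqrt_le_sqrt (hEle O hO)
  -- the distance is attained at O = 1
  have hdist : dABW L M = frobNorm (L - M * 1) := by
    apply le_antisymm
    · apply csInf_le
      · refine ⟨0, ?_⟩
        rintro r ⟨O, hO, rfl⟩
        exact Real.sqrt_nonneg _
      · exact ⟨1, memO_one, rfl⟩
    · apply le_csInf
      · exact ⟨frobNorm (L - M * 1), 1, memO_one, rfl⟩
      · rintro r ⟨O, hO, rfl⟩
        exact hfle O hO
  ext O
  simp only [OStar, Set.mem_setOf_eq]
  constructor
  · rintro ⟨hO, heq⟩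
    refine ⟨hO, ?_⟩
    rw [hdist] at heq
    have hnn : ∀ X : Mat d T, (0:ℝ) ≤ ∑ p, ∑ q, (X p q) ^ 2 := fun X =>
      Finset.sum_nonneg fun p _ => Finset.sum_nonneg fun q _ => sq_nonneg _
    have hEeq : ∑ p, ∑ q, ((L - M * O) p q) ^ 2
        = ∑ p, ∑ q, ((L - M * 1) p q) ^ 2 := by
      have h1 : Real.sqrt (∑ p, ∑ q, ((L - M * O) p q) ^ 2)
          = Real.sqrt (∑ p, ∑ q, ((L - M * 1) p q) ^ 2) := heq
      have h2 := congrArg (fun r : ℝ => r ^ 2) h1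
      beta_reduce at h2
      rwa [Real.sq_sqrt (hnn (L - M * O)), Real.sq_sqrt (hnn (L - M * 1))] at h2
    rw [hE1, frob_sq_expand L M O hO] at hEeq
    have hsums : ∑ t, (blk (Lᵀ * M) t * blk O t).trace
        = ∑ t, (blk (Lᵀ * M) t).trace := by linarith
    intro t
    exact ((htr O hO t).2).mp
      ((sum_le_sum_iff_eq _ _ (fun t => (htr O hO t).1)).mp hsums t)
  · rintro ⟨hO, hblk⟩
    refine ⟨hO, ?_⟩
    rw [hdist]
    unfold frobNorm
    congr 1
    rw [hE1, frob_sq_expand L M O hO]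
    have : ∑ t, (blk (Lᵀ * M) t * blk O t).trace
        = ∑ t, (blk (Lᵀ * M) t).trace :=
      Finset.sum_congr rfl fun t _ => by rw [hblk t]
    rw [this]

end Blocks

end Stmt14Aux
open Stmt14Aux in
/-- if `V ∈ 𝒱(L)` and for every `t` the squared operator norm of the `t`-th
block column of `V` is smaller than every strictly positive eigenvalue of `(LᵀL)_{t,t}`
(i.e. smaller than `λ⁺_min((LᵀL)_{t,t})`, with the convention `λ⁺_min(0) = +∞`), then
`((L+V)ᵀL)_{t,t}` is positive semidefinite for all `t` and `𝐎*(L, L+V) = 𝐎*(L,L)`;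
in particular, `𝐎*(L, L+V) = {Id}` whenever `L ∈ 𝐋^reg`. -/
theorem stmt14 (d T : ℕ) (hd : 0 < d) (hT : 0 < T) (L V : Mat d T)
    (hL : memL L) (hV : V ∈ calV L)
    (hsmall : ∀ t : Fin T, ∀ μ : ℝ, 0 < μ →
      (∃ x : Fin d → ℝ, x ≠ 0 ∧ (blk (Lᵀ * L) t).mulVec x = μ • x) →
      opNorm (colBlk V t) ^ 2 < μ) :
    (∀ t : Fin T, (blk ((L + V)ᵀ * L) t).PosSemidef) ∧
    OStar L (L + V) = OStar L L ∧
    (L ∈ LReg → OStar L (L + V) = {(1 : Mat d T)}) := by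
  classical
  have hcadd : ∀ t, colBlk (L + V) t = colBlk L t + colBlk V t := colBlk_add L V
  have hsymT : ∀ t : Fin T, ((colBlk V t)ᵀ * colBlk L t)ᵀ = (colBlk V t)ᵀ * colBlk L t := by
    intro t
    have h : (blk (Vᵀ * L) t)ᵀ = blk (Vᵀ * L) t := hV.2 t
    rwa [blk_transpose_mul] at h
  have hsmallT : ∀ t : Fin T, ∀ μ : ℝ, 0 < μ →
      (∃ x : Fin d → ℝ, x ≠ 0 ∧ ((colBlk L t)ᵀ * colBlk L t) *ᵥ x = μ • x) →
      opNorm (colBlk V t) ^ 2 < μ := by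
    intro t μ hμ hx
    apply hsmall t μ hμ
    rw [blk_transpose_mul]
    exact hx
  have hcore := fun t => core (colBlk L t) (colBlk V t) (hsymT t) (hsmallT t)
  have hblkLV : ∀ t, blk ((L + V)ᵀ * L) t
      = (colBlk L t)ᵀ * colBlk L t + (colBlk V t)ᵀ * colBlk L t := by
    intro t
    rw [blk_transpose_mul, hcadd, Matrix.transpose_add, Matrix.add_mul]
  have part1 : ∀ t, (blk ((L + V)ᵀ * L) t).PosSemidef := by
    intro t; rw [hblkLV t]; exact (hcore t).1
  have hblkS : ∀ t, blk (Lᵀ * (L + V)) t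
      = (colBlk L t)ᵀ * colBlk L t + (colBlk V t)ᵀ * colBlk L t := by
    intro t
    rw [blk_transpose_mul, hcadd, Matrix.mul_add]
    congr 1
    rw [← hsymT t, Matrix.transpose_mul, Matrix.transpose_transpose]
  have hblkA : ∀ t, blk (Lᵀ * L) t = (colBlk L t)ᵀ * colBlk L t :=
    fun t => blk_transpose_mul L L t
  have hApsd : ∀ t, (blk (Lᵀ * L) t).PosSemidef := by
    intro t; rw [hblkA t]
    have := Matrix.posSemidef_conjTranspose_mul_self (colBlk L t)
    rwa [ctr] at this
  have hSpsd : ∀ t, (blk (Lᵀ * (L + V)) t).PosSemidef := by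
    intro t; rw [hblkS t]; exact (hcore t).1
  have part2 : OStar L (L + V) = OStar L L := by
    rw [dABW_eq_and_OStar_char L (L + V) hSpsd, dABW_eq_and_OStar_char L L hApsd]
    ext O
    simp only [Set.mem_setOf_eq, and_congr_right_iff]
    intro hO
    refine forall_congr' fun t => ?_
    rw [hblkS t, hblkA t]
    exact mul_eq_self_iff_of_ker (hcore t).2 (blk O t)
  refine ⟨part1, part2, ?_⟩
  intro hreg
  rw [part2, dABW_eq_and_OStar_char L L hApsd]
  ext O
  simp only [Set.mem_setOf_eq, Set.mem_singleton_iff]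
  constructor
  · rintro ⟨hO, hblk⟩
    have hblk1 : ∀ t, blk O t = 1 := by
      intro t
      have hPD : (blk (Lᵀ * L) t).PosDef := hreg.2 t
      have hker : ∀ x : Fin d → ℝ, blk (Lᵀ * L) t *ᵥ x = 0 → x = 0 := by
        intro x hx
        by_contra hxne
        have hlt : (0:ℝ) < x ⬝ᵥ (blk (Lᵀ * L) t *ᵥ x) := by
          simpa using hPD.dotProduct_mulVec_pos hxne
        rw [hx, dotProduct_zero] at hlt
        exact lt_irrefl 0 hlt
      have h0 : blk (Lᵀ * L) t * (blk O t - 1) = 0 := by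
        rw [Matrix.mul_sub, Matrix.mul_one, hblk t, sub_self]
      have hcols := (mul_eq_zero_iff_cols _ _).mp h0
      have hsub : blk O t - 1 = 0 := by
        ext i j
        have := congrFun (hker _ (hcols j)) i
        simpa using this
      have := sub_eq_zero.mp hsub
      simpa using this
    ext p q
    obtain ⟨t, i⟩ := p; obtain ⟨s, j⟩ := q
    by_cases hts : t = s
    · subst hts
      have h := congrFun (congrFun (hblk1 t) i) j
      calc O (t, i) (t, j) = blk O t i j := rfl
        _ = (1 : Matrix (Fin d) (Fin d) ℝ) i j := h
        _ = (1 : Mat d T) (t, i) (t, j) := by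
            simp [Matrix.one_apply, Prod.ext_iff]
    · rw [hO.1 t s i j hts]
      symm
      apply Matrix.one_apply_ne
      simp only [ne_eq, Prod.mk.injEq, not_and]
      intro hc; exact absurd hc hts
  · rintro rfl
    exact ⟨memO_one, fun t => by rw [blk_one, Matrix.mul_one]⟩
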